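/- Let A be a (possibly non-associative) algebra over a commutative ring K, and let π : G → End(A) be a partial representation of G by algebra endomorphisms such that the image of each π(g) is a two-sided ideal of A. Then for all a, b ∈ A and g, h ∈ G: π(g)(a)·π(h)(b) = π(g)(a · π(g⁻¹h)(b)). -/
import Mathlib


/-- For an ideal partial representation `π` of `G` by endomorphisms of a
(possibly non-associative) `K`-algebra `A`:
`π g a * π h b = π g (a * π (g⁻¹ h) b)`. -/
theorem stmt6 {K G A : Type*} [CommRing K] [Group G]
    [NonUnitalNonAssocRing A] [Module K A]
    (π : G → A →ₗ[K] A)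
    (hmul : ∀ (g : G) (a b : A), π g (a * b) = π g a * π g b)
    (h1 : ∀ a : A, π 1 a = a)
    (h2 : ∀ (g h : G) (a : A), π g⁻¹ (π g (π h a)) = π g⁻¹ (π (g * h) a))
    (h3 : ∀ (g h : G) (a : A), π g (π h (π h⁻¹ a)) = π (g * h) (π h⁻¹ a))
    (hideal : ∀ (g : G) (a b : A),
      a * π g b ∈ LinearMap.range (π g) ∧ π g b * a ∈ LinearMap.range (π g)) :
    ∀ (g h : G) (a b : A), π g a * π h b = π g (a * π (g⁻¹ * h) b) := by
  -- `π g ∘ π g⁻¹` is the identity on the range of `π g`.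
  have key : ∀ (g : G) (x : A), π g (π g⁻¹ (π g x)) = π g x := by
    intro g x
    have := h3 g g⁻¹ x
    simpa [h1] using this
  intro g h a b
  obtain ⟨c, hc⟩ := (hideal g (π h b) a).2
  have h2' : π g (π g⁻¹ (π h b)) = π g (π (g⁻¹ * h) b) := by
    have := h2 g⁻¹ h b
    simpa using this
  calc π g a * π h b = π g c := hc.symm
    _ = π g (π g⁻¹ (π g c)) := (key g c).symm
    _ = π g (π g⁻¹ (π g a * π h b)) := by rw [hc]
    _ = π g (π g⁻¹ (π g a) * π g⁻¹ (π h b)) := by rw [hmul]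
    _ = π g (π g⁻¹ (π g a)) * π g (π g⁻¹ (π h b)) := hmul _ _ _
    _ = π g a * π g (π (g⁻¹ * h) b) := by rw [key, h2']
    _ = π g (a * π (g⁻¹ * h) b) := (hmul _ _ _).symm
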